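/- Let a₁, …, aₙ ∈ G, b₁, …, bₙ ∈ M, and c ∈ G satisfy a_i · b_i = c for all 1 ≤ i ≤ n. Then (a₁ ∨_p ⋯ ∨_p aₙ) · (b₁ ∧ₛ ⋯ ∧ₛ bₙ) = c and (a₁ ∧_p ⋯ ∧_p aₙ) · (b₁ ∨ₛ ⋯ ∨ₛ bₙ) = c. -/

import Mathlib

variable {G : Type*} [Group G]

/-- The prefix relation: `x ≼ y` iff `x⁻¹ * y ∈ M`. -/
def PrefixRel (M : Submonoid G) (x y : G) : Prop := x⁻¹ * y ∈ M

/-- The suffix relation: `x ≼ₛ y` iff `y * x⁻¹ ∈ M`. -/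
def SuffixRel (M : Submonoid G) (x y : G) : Prop := y * x⁻¹ ∈ M

/-- `x` is an upper bound of `s` with respect to the relation `le`. -/
def IsUBOf (le : G → G → Prop) (s : Set G) (x : G) : Prop := ∀ y ∈ s, le y x

/-- `x` is a least upper bound (join) of `s` with respect to the relation `le`. -/
def IsLUBOf (le : G → G → Prop) (s : Set G) (x : G) : Prop :=
  IsUBOf le s x ∧ ∀ z, IsUBOf le s z → le x z

/-- `x` is a greatest lower bound (meet) of `s` with respect to the relation `le`. -/
def IsGLBOf (le : G → G → Prop) (s : Set G) (x : G) : Prop :=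
  (∀ y ∈ s, le x y) ∧ ∀ z, (∀ y ∈ s, le z y) → le z x

/-- The relation `le` makes `G` into a lattice: every pair of elements has a join and
a meet. -/
def IsLatticeRel (le : G → G → Prop) : Prop :=
  ∀ a b : G, (∃ x, IsLUBOf le {a, b} x) ∧ ∃ y, IsGLBOf le {a, b} y

/-- If `aᵢ · bᵢ = c` for all `i` (with each `bᵢ ∈ M`), then
`(a₁ ∨_p ⋯ ∨_p aₙ) · (b₁ ∧ₛ ⋯ ∧ₛ bₙ) = c` and
`(a₁ ∧_p ⋯ ∧_p aₙ) · (b₁ ∨ₛ ⋯ ∨ₛ bₙ) = c` (joins and meets stated via the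
least-upper-bound and greatest-lower-bound predicates). -/
theorem join_mul_meet_eq (M : Submonoid G)
    (hM : ∀ x : G, x ∈ M → x⁻¹ ∈ M → x = 1)
    (hlp : IsLatticeRel (PrefixRel M)) (hls : IsLatticeRel (SuffixRel M))
    (n : ℕ) (hn : 0 < n) (a b : Fin n → G) (c : G)
    (hbM : ∀ i, b i ∈ M) (habc : ∀ i, a i * b i = c) :
    (∀ ja mb : G, IsLUBOf (PrefixRel M) (Set.range a) ja →
      IsGLBOf (SuffixRel M) (Set.range b) mb → ja * mb = c) ∧
    (∀ ma jb : G, IsGLBOf (PrefixRel M) (Set.range a) ma →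
      IsLUBOf (SuffixRel M) (Set.range b) jb → ma * jb = c) := by

  have antis : ∀ x y : G, SuffixRel M x y → SuffixRel M y x → x = y := by
    intro x y h1 h2
    have h3 : (y * x⁻¹)⁻¹ ∈ M := by simpa [mul_inv_rev, SuffixRel] using h2
    have h4 := hM _ h1 h3
    rw [mul_inv_eq_one] at h4
    exact h4.symm
  have hb : ∀ i, b i = (a i)⁻¹ * c := by
    intro i; rw [← habc i]; group
  constructor
  · intro ja mb hja hmb
    have key : IsGLBOf (SuffixRel M) (Set.range b) (ja⁻¹ * c) := by
      constructor
      · rintro y ⟨i, rfl⟩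
        have h := hja.1 (a i) ⟨i, rfl⟩
        unfold PrefixRel at h
        unfold SuffixRel
        rw [hb i]
        convert h using 1
        group
      · intro z hz
        have hub : IsUBOf (PrefixRel M) (Set.range a) (c * z⁻¹) := by
          rintro y ⟨i, rfl⟩
          have h := hz (b i) ⟨i, rfl⟩
          unfold SuffixRel at h
          rw [hb i] at h
          unfold PrefixRel
          convert h using 1
          group
        have h := hja.2 _ hub
        unfold PrefixRel at h
        unfold SuffixRel
        convert h using 1
        group
    have heq : mb = ja⁻¹ * c := by
      apply antis
      · exact key.2 _ hmb.1
      · exact hmb.2 _ key.1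
    rw [heq]; group
  · intro ma jb hma hjb
    have key : IsLUBOf (SuffixRel M) (Set.range b) (ma⁻¹ * c) := by
      constructor
      · rintro y ⟨i, rfl⟩
        have h := hma.1 (a i) ⟨i, rfl⟩
        unfold PrefixRel at h
        unfold SuffixRel
        rw [hb i]
        convert h using 1
        group
      · intro z hz
        have hlb : ∀ y ∈ Set.range a, PrefixRel M (c * z⁻¹) y := by
          rintro y ⟨i, rfl⟩
          have h := hz (b i) ⟨i, rfl⟩
          unfold SuffixRel at h
          rw [hb i] at h
          unfold PrefixRel
          convert h using 1
          group
        have h := hma.2 _ hlb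
        unfold PrefixRel at h
        unfold SuffixRel
        convert h using 1
        group
    have heq : jb = ma⁻¹ * c := by
      apply antis
      · exact hjb.2 _ key.1
      · exact key.2 _ hjb.1
    rw [heq]; group
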